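/- Under μ conditioned on the ellipsoidal event, every coordinate has conditional mean zero: for every a > 0, every η : Fin d → ℝ with all η_j ≥ 0, and every index i, ∫ z_i dμ[|S(η,a)] = 0. (This is the key symmetry step in the proof of Theorem 1, showing all covariate mean differences remain centered at zero after Quadratic Form Rerandomization.) -/

import Mathlib

open MeasureTheory ProbabilityTheory

lemma gaussian_map_neg : (gaussianReal 0 1).map (fun x : ℝ => -x) = gaussianReal 0 1 := by
  have h := gaussianReal_map_const_mul (μ := 0) (v := 1) (-1)
  have h2 : (fun x : ℝ => -x) = ((-1 : ℝ) * ·) := by funext x; ring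
  rw [h2, h]
  norm_num

lemma pi_gaussian_map_neg (d : ℕ) :
    (Measure.pi fun _ : Fin d => gaussianReal 0 1).map (fun z => -z) =
      Measure.pi fun _ : Fin d => gaussianReal 0 1 := by
  have hmeas : Measurable fun z : Fin d → ℝ => -z :=
    measurable_pi_lambda _ fun i => (measurable_pi_apply i).neg
  refine (Measure.pi_eq fun s hs => ?_).symm
  rw [Measure.map_apply hmeas (MeasurableSet.univ_pi hs)]
  have hpre : (fun z : Fin d → ℝ => -z) ⁻¹' Set.univ.pi s
      = Set.univ.pi fun i => (fun x : ℝ => -x) ⁻¹' s i := by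
    ext z; simp [Set.mem_pi]
  rw [hpre, Measure.pi_pi]
  refine Finset.prod_congr rfl fun i _ => ?_
  rw [← Measure.map_apply measurable_neg (hs i)]
  congr 1
  exact gaussian_map_neg

/-- Under the product of `d` standard Gaussians conditioned on the ellipsoidal event
`{z | ∑ j, η j * (z j)^2 ≤ a}`, every coordinate has conditional mean zero. -/
theorem conditional_mean_zero (d : ℕ) (hd : 1 ≤ d) (a : ℝ) (ha : 0 < a)
    (η : Fin d → ℝ) (hη : ∀ j, 0 ≤ η j) (i : Fin d) :
    ∫ z, z i ∂((Measure.pi fun _ : Fin d => gaussianReal 0 1)[|{z | ∑ j, η j * (z j) ^ 2 ≤ a}])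
      = 0 := by
  set μ : Measure (Fin d → ℝ) := Measure.pi fun _ : Fin d => gaussianReal 0 1 with hμ
  set S : Set (Fin d → ℝ) := {z | ∑ j, η j * (z j) ^ 2 ≤ a} with hS
  have hmeas : Measurable fun z : Fin d → ℝ => -z :=
    measurable_pi_lambda _ fun i => (measurable_pi_apply i).neg
  have hSmeas : MeasurableSet S := by
    apply measurableSet_le
    · exact Finset.measurable_sum _ fun j _ =>
        (measurable_const (a := η j)).mul ((measurable_pi_apply j).pow_const 2)
    · exact measurable_const
  have hpre : (fun z : Fin d → ℝ => -z) ⁻¹' S = S := by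
    ext z
    simp [hS]
  have hmap : μ.map (fun z => -z) = μ := pi_gaussian_map_neg d
  have hcondmap : (μ[|S]).map (fun z => -z) = μ[|S] := by
    rw [ProbabilityTheory.cond, Measure.map_smul]
    congr 1
    calc (μ.restrict S).map (fun z => -z)
        = ((μ.restrict ((fun z : Fin d → ℝ => -z) ⁻¹' S)).map (fun z => -z)) := by rw [hpre]
      _ = (μ.map (fun z => -z)).restrict S := (Measure.restrict_map hmeas hSmeas).symm
      _ = μ.restrict S := by rw [hmap]
  have hsm : StronglyMeasurable fun z : Fin d → ℝ => z i :=
    (measurable_pi_apply i).stronglyMeasurable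
  have key : ∫ z, z i ∂(μ[|S]) = - ∫ z, z i ∂(μ[|S]) := by
    conv_lhs => rw [← hcondmap]
    rw [integral_map hmeas.aemeasurable hsm.aestronglyMeasurable]
    simp [integral_neg]
  linarith
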